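/- Let R be the operator on functions on the open unit interval (0,1) defined by (Rf)(x) = (1/2)( (1/x)∫₀ˣ f(t) dt + (1/(1−x))∫ₓ¹ f(t) dt ). Then the probability measure dλ(x) = dx/(π√(x(1−x))) on (0,1) satisfies λR = λ, i.e., ∫₀¹ (Rf)(x) dλ(x) = ∫₀¹ f(x) dλ(x) for all bounded measurable f on (0,1). -/

import Mathlib

open MeasureTheory Set Real intervalIntegral
open scoped ENNReal NNReal

/-- FTC on an open interval. -/
lemma ftc_Ioo {a b : ℝ} (hab : a < b) {F g : ℝ → ℝ}
    (hcont : ContinuousOn F (Icc a b))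
    (hderiv : ∀ x ∈ Ioo a b, HasDerivAt F (g x) x)
    (hint : IntegrableOn g (Ioo a b)) :
    ∫ x in Ioo a b, g x = F b - F a := by
  have h1 : IntervalIntegrable g volume a b := by
    rw [intervalIntegrable_iff_integrableOn_Ioo_of_le hab.le]; exact hint
  have := intervalIntegral.integral_eq_sub_of_hasDeriv_right_of_le hab.le hcont
    (fun x hx => (hderiv x hx).hasDerivWithinAt) h1
  rw [intervalIntegral.integral_of_le hab.le, integral_Ioc_eq_integral_Ioo] at this
  exact this

lemma integrableOn_of_bound {s : Set ℝ} (hs : MeasurableSet s) {f g : ℝ → ℝ}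
    (hf : Measurable f) (hg : IntegrableOn g s) (h : ∀ x ∈ s, |f x| ≤ g x) :
    IntegrableOn f s := by
  refine Integrable.mono hg hf.aestronglyMeasurable.restrict ?_
  filter_upwards [ae_restrict_mem hs] with x hx
  rw [Real.norm_eq_abs, Real.norm_eq_abs]
  exact (h x hx).trans (le_abs_self _)

lemma integrableOn_inv_sqrt (a b : ℝ) (ha : 0 ≤ a) :
    IntegrableOn (fun x => (Real.sqrt x)⁻¹) (Ioo a b) := by
  rcases le_or_gt b a with h | h
  · simp [Ioo_eq_empty_of_le h]
  have h1 : IntervalIntegrable (fun x : ℝ => x ^ (-1/2 : ℝ)) volume a b :=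
    intervalIntegral.intervalIntegrable_rpow' (by norm_num)
  rw [intervalIntegrable_iff_integrableOn_Ioo_of_le h.le] at h1
  refine h1.congr_fun (fun x hx => ?_) measurableSet_Ioo
  have hx0 : 0 < x := lt_of_le_of_lt ha hx.1
  beta_reduce
  rw [show (-1/2 : ℝ) = -(1/2) by norm_num, Real.rpow_neg hx0.le, Real.sqrt_eq_rpow]

lemma integrableOn_inv_sqrt_one_sub (a b : ℝ) (hb : b ≤ 1) :
    IntegrableOn (fun x => (Real.sqrt (1 - x))⁻¹) (Ioo a b) := by
  rcases le_or_gt b a with h | h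
  · simp [Ioo_eq_empty_of_le h]
  have h1 : IntervalIntegrable (fun x : ℝ => (Real.sqrt x)⁻¹) volume (1-a) (1-b) := by
    refine IntervalIntegrable.symm ?_
    rw [intervalIntegrable_iff_integrableOn_Ioo_of_le (by linarith)]
    exact integrableOn_inv_sqrt _ _ (by linarith)
  have h2 := h1.comp_sub_left 1
  simp only [sub_sub_cancel] at h2
  rw [intervalIntegrable_iff_integrableOn_Ioo_of_le h.le] at h2
  exact h2

noncomputable def wden (x : ℝ) : ℝ := 1 / (Real.pi * Real.sqrt (x * (1 - x)))

lemma wden_nonneg (x : ℝ) : 0 ≤ wden x := by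
  unfold wden; positivity

lemma wden_meas : Measurable wden := by
  unfold wden; fun_prop

lemma sqrt_add_ge (x : ℝ) (hx : x ∈ Ioo (0:ℝ) 1) :
    1 / Real.sqrt (x * (1-x)) ≤ (Real.sqrt x)⁻¹ + (Real.sqrt (1-x))⁻¹ := by
  obtain ⟨hx0, hx1⟩ := hx
  have ha : (0:ℝ) < Real.sqrt x := Real.sqrt_pos.mpr hx0
  have hb : (0:ℝ) < Real.sqrt (1-x) := Real.sqrt_pos.mpr (by linarith)
  have e1 : Real.sqrt x ^ 2 = x := Real.sq_sqrt hx0.le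
  have e2 : Real.sqrt (1-x) ^ 2 = 1 - x := Real.sq_sqrt (by linarith)
  have hab : Real.sqrt x + Real.sqrt (1-x) ≥ 1 := by
    nlinarith [ha, hb, e1, e2]
  rw [Real.sqrt_mul hx0.le, one_div]
  have : (Real.sqrt x)⁻¹ + (Real.sqrt (1-x))⁻¹
      = (Real.sqrt x + Real.sqrt (1-x)) * (Real.sqrt x * Real.sqrt (1-x))⁻¹ := by
    field_simp; ring
  rw [this]
  nth_rewrite 1 [show (Real.sqrt x * Real.sqrt (1-x))⁻¹
    = 1 * (Real.sqrt x * Real.sqrt (1-x))⁻¹ by ring]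
  gcongr

example : True := trivial

lemma wden_int : IntegrableOn wden (Ioo (0:ℝ) 1) := by
  refine integrableOn_of_bound measurableSet_Ioo wden_meas
    (g := fun x => (1/Real.pi) * ((Real.sqrt x)⁻¹ + (Real.sqrt (1-x))⁻¹)) ?_ ?_
  · exact (((integrableOn_inv_sqrt 0 1 le_rfl).add
      (integrableOn_inv_sqrt_one_sub 0 1 le_rfl))).const_mul _
  · intro x hx
    rw [abs_of_nonneg (wden_nonneg x)]
    have h := sqrt_add_ge x hx
    have hpi : (0:ℝ) < Real.pi := Real.pi_pos
    unfold wden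
    rw [show (1:ℝ) / (Real.pi * Real.sqrt (x*(1-x)))
      = (1/Real.pi) * (1 / Real.sqrt (x*(1-x))) by ring]
    exact mul_le_mul_of_nonneg_left h (by positivity)

lemma wden_integral : ∫ x in Ioo (0:ℝ) 1, wden x = 1 := by
  have hF : ∀ x ∈ Ioo (0:ℝ) 1,
      HasDerivAt (fun y => (1/Real.pi) * Real.arcsin (2*y - 1)) (wden x) x := by
    intro x hx
    obtain ⟨hx0, hx1⟩ := hx
    have h1 : HasDerivAt (fun y : ℝ => 2*y - 1) 2 x := by
      simpa using ((hasDerivAt_id x).const_mul 2).sub_const 1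
    have h2 : HasDerivAt Real.arcsin (1 / Real.sqrt (1 - (2*x-1)^2)) (2*x-1) :=
      Real.hasDerivAt_arcsin (by intro h; nlinarith [h]) (by intro h; nlinarith [h])
    have h3 := (h2.comp x h1).const_mul (1/Real.pi)
    refine h3.congr_deriv ?_
    have e : 1 - (2*x-1)^2 = 2^2 * (x * (1-x)) := by ring
    rw [e, Real.sqrt_mul (by norm_num : (0:ℝ) ≤ 2^2), Real.sqrt_sq (by norm_num : (0:ℝ) ≤ 2)]
    have hs : (0:ℝ) < Real.sqrt (x*(1-x)) := Real.sqrt_pos.mpr (by nlinarith)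
    unfold wden
    field_simp
  have := ftc_Ioo (by norm_num : (0:ℝ) < 1)
    (F := fun y => (1/Real.pi) * Real.arcsin (2*y - 1))
    (continuous_const.mul (Real.continuous_arcsin.comp (by continuity))).continuousOn
    hF wden_int
  rw [this]
  norm_num [Real.arcsin_one, Real.arcsin_neg_one]
  field_simp
  norm_num

lemma derivA (x : ℝ) (hx : x ∈ Ioo (0:ℝ) 1) :
    HasDerivAt (fun y => -2 * (Real.sqrt (1-y) / Real.sqrt y))
      (1/(x * Real.sqrt (x*(1-x)))) x := by
  obtain ⟨hx0, hx1⟩ := hx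
  have hsx : (0:ℝ) < Real.sqrt x := Real.sqrt_pos.mpr hx0
  have hs1 : (0:ℝ) < Real.sqrt (1-x) := Real.sqrt_pos.mpr (by linarith)
  have h1 : HasDerivAt (fun y : ℝ => Real.sqrt (1-y)) (1/(2*Real.sqrt (1-x)) * (-1)) x :=
    (Real.hasDerivAt_sqrt (ne_of_gt (by linarith : (0:ℝ) < 1 - x))).comp x
      ((hasDerivAt_id x).const_sub 1)
  have h2 : HasDerivAt Real.sqrt (1/(2*Real.sqrt x)) x := Real.hasDerivAt_sqrt hx0.ne'
  have h3 := (h1.div h2 hsx.ne').const_mul (-2 : ℝ)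
  refine h3.congr_deriv ?_
  rw [Real.sqrt_mul hx0.le]
  have e1 : Real.sqrt x ^ 2 = x := Real.sq_sqrt hx0.le
  have e2 : Real.sqrt (1-x) ^ 2 = 1 - x := Real.sq_sqrt (by linarith)
  field_simp
  linear_combination (x - 1) * e1
    + (x) * e2

lemma derivB (x : ℝ) (hx : x ∈ Ioo (0:ℝ) 1) :
    HasDerivAt (fun y => 2 * (Real.sqrt y / Real.sqrt (1-y)))
      (1/((1-x) * Real.sqrt (x*(1-x)))) x := by
  obtain ⟨hx0, hx1⟩ := hx
  have hsx : (0:ℝ) < Real.sqrt x := Real.sqrt_pos.mpr hx0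
  have hs1 : (0:ℝ) < Real.sqrt (1-x) := Real.sqrt_pos.mpr (by linarith)
  have h1 : HasDerivAt (fun y : ℝ => Real.sqrt (1-y)) (1/(2*Real.sqrt (1-x)) * (-1)) x :=
    (Real.hasDerivAt_sqrt (ne_of_gt (by linarith : (0:ℝ) < 1 - x))).comp x
      ((hasDerivAt_id x).const_sub 1)
  have h2 : HasDerivAt Real.sqrt (1/(2*Real.sqrt x)) x := Real.hasDerivAt_sqrt hx0.ne'
  have h3 := (h2.div h1 hs1.ne').const_mul (2 : ℝ)
  refine h3.congr_deriv ?_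
  rw [Real.sqrt_mul hx0.le]
  have e1 : Real.sqrt x ^ 2 = x := Real.sq_sqrt hx0.le
  have e2 : Real.sqrt (1-x) ^ 2 = 1 - x := Real.sq_sqrt (by linarith)
  have hne : (1:ℝ) - x ≠ 0 := ne_of_gt (by linarith)
  field_simp [hx0.ne', hsx.ne', hs1.ne', hne]
  linear_combination (1 - x) * e1
    + (-x) * e2

lemma hA (t : ℝ) (ht : t ∈ Ioo (0:ℝ) 1) :
    IntegrableOn (fun x => wden x * (1/(2*x))) (Ioo t 1) ∧
    ∫ x in Ioo t 1, wden x * (1/(2*x)) = Real.sqrt (1-t) / (Real.pi * Real.sqrt t) := by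
  obtain ⟨ht0, ht1⟩ := ht
  have hst : (0:ℝ) < Real.sqrt t := Real.sqrt_pos.mpr ht0
  have hpt : ∀ x : ℝ, wden x * (1/(2*x)) = (1/(2*Real.pi)) * (1/(x*Real.sqrt (x*(1-x)))) := by
    intro x; unfold wden; ring
  have hcore : IntegrableOn (fun x => 1/(x*Real.sqrt (x*(1-x)))) (Ioo t 1) := by
    refine integrableOn_of_bound measurableSet_Ioo (by simp only [one_div]; fun_prop)
      (g := fun x => (1/(t*Real.sqrt t)) * (Real.sqrt (1-x))⁻¹)
      ((integrableOn_inv_sqrt_one_sub t 1 le_rfl).const_mul _) ?_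
    intro x hx
    have hx0 : 0 < x := ht0.trans hx.1
    rw [abs_of_nonneg (by positivity)]
    rw [Real.sqrt_mul hx0.le]
    have e : (1/(t*Real.sqrt t)) * (Real.sqrt (1-x))⁻¹
        = 1/((t*Real.sqrt t)*Real.sqrt (1-x)) := by
      rw [one_div, one_div, ← mul_inv]
    show 1 / (x * (Real.sqrt x * Real.sqrt (1-x))) ≤ (1/(t*Real.sqrt t)) * (Real.sqrt (1-x))⁻¹
    rw [e, show x * (Real.sqrt x * Real.sqrt (1-x)) = (x * Real.sqrt x) * Real.sqrt (1-x)
      from by ring]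
    have hs1 : (0:ℝ) < Real.sqrt (1-x) := Real.sqrt_pos.mpr (by linarith [hx.2])
    apply one_div_le_one_div_of_le (by positivity)
    gcongr <;> linarith [hx.1]
  have heval : ∫ x in Ioo t 1, 1/(x*Real.sqrt (x*(1-x)))
      = 2 * Real.sqrt (1-t) / Real.sqrt t := by
    have hcont : ContinuousOn (fun y => -2 * (Real.sqrt (1-y) / Real.sqrt y)) (Icc t 1) := by
      refine continuous_const.continuousOn.mul
        (((Real.continuous_sqrt.comp (continuous_const.sub continuous_id)).continuousOn).div
          Real.continuous_sqrt.continuousOn fun x hx =>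
            ne_of_gt (Real.sqrt_pos.mpr (lt_of_lt_of_le ht0 hx.1)))
    have := ftc_Ioo ht1 hcont (fun x hx => derivA x ⟨ht0.trans hx.1, hx.2⟩) hcore
    rw [this]
    simp [Real.sqrt_one]
    ring
  constructor
  · refine MeasureTheory.IntegrableOn.congr_fun ?_ (fun x _ => (hpt x).symm) measurableSet_Ioo
    exact hcore.const_mul _
  · calc ∫ x in Ioo t 1, wden x * (1/(2*x))
        = ∫ x in Ioo t 1, (1/(2*Real.pi)) * (1/(x*Real.sqrt (x*(1-x)))) := by
          exact setIntegral_congr_fun measurableSet_Ioo (fun x _ => hpt x)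
      _ = (1/(2*Real.pi)) * ∫ x in Ioo t 1, 1/(x*Real.sqrt (x*(1-x))) := by
          rw [MeasureTheory.integral_const_mul]
      _ = Real.sqrt (1-t) / (Real.pi * Real.sqrt t) := by rw [heval]; ring

lemma hB (t : ℝ) (ht : t ∈ Ioo (0:ℝ) 1) :
    IntegrableOn (fun x => wden x * (1/(2*(1-x)))) (Ioo 0 t) ∧
    ∫ x in Ioo 0 t, wden x * (1/(2*(1-x))) = Real.sqrt t / (Real.pi * Real.sqrt (1-t)) := by
  obtain ⟨ht0, ht1⟩ := ht
  have hst : (0:ℝ) < Real.sqrt (1-t) := Real.sqrt_pos.mpr (by linarith)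
  have hpt : ∀ x : ℝ, wden x * (1/(2*(1-x)))
      = (1/(2*Real.pi)) * (1/((1-x)*Real.sqrt (x*(1-x)))) := by
    intro x; unfold wden; generalize (1:ℝ) - x = u; ring
  have hcore : IntegrableOn (fun x => 1/((1-x)*Real.sqrt (x*(1-x)))) (Ioo 0 t) := by
    refine integrableOn_of_bound measurableSet_Ioo (by simp only [one_div]; fun_prop)
      (g := fun x => (1/((1-t)*Real.sqrt (1-t))) * (Real.sqrt x)⁻¹)
      ((integrableOn_inv_sqrt 0 t le_rfl).const_mul _) ?_
    intro x hx
    have hx1 : x < 1 := hx.2.trans ht1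
    have hx1' : 0 < 1 - x := by linarith
    rw [abs_of_nonneg (by positivity)]
    rw [Real.sqrt_mul hx.1.le]
    have e : (1/((1-t)*Real.sqrt (1-t))) * (Real.sqrt x)⁻¹
        = 1/(((1-t)*Real.sqrt (1-t))*Real.sqrt x) := by
      rw [one_div, one_div, ← mul_inv]
    show 1 / ((1-x) * (Real.sqrt x * Real.sqrt (1-x)))
        ≤ (1/((1-t)*Real.sqrt (1-t))) * (Real.sqrt x)⁻¹
    rw [e, show (1-x) * (Real.sqrt x * Real.sqrt (1-x)) = ((1-x) * Real.sqrt (1-x)) * Real.sqrt x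
      from by ring]
    have hsx : (0:ℝ) < Real.sqrt x := Real.sqrt_pos.mpr hx.1
    apply one_div_le_one_div_of_le (mul_pos (mul_pos (by linarith) hst) hsx)
    gcongr <;> linarith [hx.2]
  have heval : ∫ x in Ioo 0 t, 1/((1-x)*Real.sqrt (x*(1-x)))
      = 2 * Real.sqrt t / Real.sqrt (1-t) := by
    have hcont : ContinuousOn (fun y => 2 * (Real.sqrt y / Real.sqrt (1-y))) (Icc 0 t) := by
      refine continuous_const.continuousOn.mul
        ((Real.continuous_sqrt.continuousOn).div
          ((Real.continuous_sqrt.comp (continuous_const.sub continuous_id)).continuousOn)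
          fun x hx => ne_of_gt (Real.sqrt_pos.mpr (by
            have := hx.2; show (0:ℝ) < 1 - x; linarith)))
    have := ftc_Ioo ht0 hcont (fun x hx => derivB x ⟨hx.1, hx.2.trans ht1⟩) hcore
    rw [this]
    simp [Real.sqrt_zero]
    ring
  constructor
  · refine MeasureTheory.IntegrableOn.congr_fun ?_ (fun x _ => (hpt x).symm) measurableSet_Ioo
    exact hcore.const_mul _
  · calc ∫ x in Ioo 0 t, wden x * (1/(2*(1-x)))
        = ∫ x in Ioo 0 t, (1/(2*Real.pi)) * (1/((1-x)*Real.sqrt (x*(1-x)))) := by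
          exact setIntegral_congr_fun measurableSet_Ioo (fun x _ => hpt x)
      _ = (1/(2*Real.pi)) * ∫ x in Ioo 0 t, 1/((1-x)*Real.sqrt (x*(1-x))) := by
          rw [MeasureTheory.integral_const_mul]
      _ = Real.sqrt t / (Real.pi * Real.sqrt (1-t)) := by rw [heval]; ring

/-- The transfer operator `(Rf)(x) = ½( (1/x)∫₀ˣ f + (1/(1−x))∫ₓ¹ f )` on `(0,1)`. -/
noncomputable def Rop (f : ℝ → ℝ) (x : ℝ) : ℝ :=
  (1 / 2) * ((1 / x) * ∫ t in Set.Ioo (0 : ℝ) x, f t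
    + (1 / (1 - x)) * ∫ t in Set.Ioo x (1 : ℝ), f t)

/-- The arcsine measure `dλ(x) = dx / (π √(x(1−x)))` on `(0,1)`. -/
noncomputable def arcsine : Measure ℝ :=
  (volume.restrict (Set.Ioo (0 : ℝ) 1)).withDensity
    (fun x => ENNReal.ofReal (1 / (Real.pi * Real.sqrt (x * (1 - x)))))

instance : IsFiniteMeasure (volume.restrict (Ioo (0:ℝ) 1)) := by
  constructor
  rw [Measure.restrict_apply_univ, Real.volume_Ioo]
  norm_num

lemma integral_arcsine (g : ℝ → ℝ) :
    ∫ x, g x ∂arcsine = ∫ x in Ioo (0:ℝ) 1, wden x * g x := by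
  have h0 : arcsine = (volume.restrict (Ioo (0:ℝ) 1)).withDensity
      (fun x => (((wden x).toNNReal : ℝ≥0) : ℝ≥0∞)) := by
    rfl
  rw [h0, integral_withDensity_eq_integral_smul wden_meas.real_toNNReal]
  congr 1
  ext x
  rw [NNReal.smul_def, smul_eq_mul, Real.coe_toNNReal _ (wden_nonneg x)]

lemma arcsine_prob : IsProbabilityMeasure arcsine := by
  constructor
  have h0 : arcsine Set.univ = ∫⁻ x, ENNReal.ofReal (wden x)
      ∂(volume.restrict (Ioo (0:ℝ) 1)) := by
    rw [show arcsine = (volume.restrict (Ioo (0:ℝ) 1)).withDensity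
      (fun x => ENNReal.ofReal (wden x)) from rfl,
      withDensity_apply _ MeasurableSet.univ, Measure.restrict_univ]
  rw [h0, ← ofReal_integral_eq_lintegral_ofReal wden_int
    (Filter.Eventually.of_forall fun x => wden_nonneg x)]
  rw [show ∫ x, wden x ∂(volume.restrict (Ioo (0:ℝ) 1)) = 1 from wden_integral]
  simp

lemma T1 (f : ℝ → ℝ) (hf : Measurable f) (C : ℝ) (hC : ∀ x, |f x| ≤ C) :
    Integrable (fun x => (wden x * (1/(2*x))) * ∫ t in Ioo (0:ℝ) x, f t)
      (volume.restrict (Ioo (0:ℝ) 1)) ∧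
    Integrable (fun t => (Real.sqrt (1-t) / (Real.pi * Real.sqrt t)) * f t)
      (volume.restrict (Ioo (0:ℝ) 1)) ∧
    ∫ x in Ioo (0:ℝ) 1, (wden x * (1/(2*x))) * ∫ t in Ioo (0:ℝ) x, f t
      = ∫ t in Ioo (0:ℝ) 1, (Real.sqrt (1-t) / (Real.pi * Real.sqrt t)) * f t := by
  have hCnn : 0 ≤ C := le_trans (abs_nonneg _) (hC 0)
  set μ := volume.restrict (Ioo (0:ℝ) 1) with hμ
  set c1 : ℝ → ℝ := fun x => wden x * (1/(2*x)) with hc1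
  have hc1meas : Measurable c1 := by
    apply wden_meas.mul
    simp only [one_div]
    fun_prop
  set g1 : ℝ × ℝ → ℝ := fun p => c1 p.1 * (Ioo (0:ℝ) p.1).indicator f p.2 with hg1
  have hg1eq : g1 = {q : ℝ × ℝ | 0 < q.2 ∧ q.2 < q.1}.indicator
      (fun q => c1 q.1 * f q.2) := by
    ext p
    simp only [hg1, Set.indicator_apply, mem_Ioo, mem_setOf_eq]
    by_cases h : 0 < p.2 ∧ p.2 < p.1 <;> simp [h]
  have hSmeas : MeasurableSet {q : ℝ × ℝ | 0 < q.2 ∧ q.2 < q.1} :=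
    (measurableSet_lt measurable_const measurable_snd).inter
      (measurableSet_lt measurable_snd measurable_fst)
  have hg1meas : Measurable g1 := by
    rw [hg1eq]
    exact ((hc1meas.comp measurable_fst).mul (hf.comp measurable_snd)).indicator hSmeas
  -- slice integrability in t
  have hslice : ∀ x : ℝ, Integrable (fun t => g1 (x, t)) μ := by
    intro x
    refine Integrable.mono' (integrable_const (|c1 x| * C))
      ((hg1meas.comp (measurable_prodMk_left)).aestronglyMeasurable)
      (Filter.Eventually.of_forall fun t => ?_)
    simp only [hg1, Real.norm_eq_abs, abs_mul]
    by_cases h : t ∈ Ioo (0:ℝ) x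
    · rw [Set.indicator_of_mem h]
      exact mul_le_mul_of_nonneg_left (hC t) (abs_nonneg _)
    · rw [Set.indicator_of_notMem h]
      simp [mul_nonneg (abs_nonneg _) hCnn]
  -- integrability of the product function
  have hint : Integrable g1 (μ.prod μ) := by
    rw [← Function.uncurry_curry g1] at hg1meas ⊢
    refine (integrable_prod_iff hg1meas.aestronglyMeasurable).mpr ⟨?_, ?_⟩
    · exact Filter.Eventually.of_forall fun x => hslice x
    · refine Integrable.mono' ((wden_int.const_mul (C/2) :
        Integrable (fun x => (C/2) * wden x) μ))
        (hg1meas.aestronglyMeasurable.norm.integral_prod_right')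
        ?_
      filter_upwards [ae_restrict_mem measurableSet_Ioo] with x hx
      obtain ⟨hx0, hx1⟩ := hx
      have hnn : 0 ≤ ∫ t, ‖Function.uncurry (Function.curry g1) (x, t)‖ ∂μ :=
        integral_nonneg fun t => norm_nonneg _
      rw [Real.norm_eq_abs, abs_of_nonneg hnn]
      have hbound : ∫ t, ‖Function.uncurry (Function.curry g1) (x, t)‖ ∂μ
          ≤ ∫ t, (Ioo (0:ℝ) x).indicator (fun _ => |c1 x| * C) t ∂μ := by
        refine integral_mono (hslice x).norm
          ((integrable_const _).indicator measurableSet_Ioo) fun t => ?_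
        simp only [Function.uncurry_curry, hg1, Real.norm_eq_abs, abs_mul]
        by_cases h : t ∈ Ioo (0:ℝ) x
        · rw [Set.indicator_of_mem h, Set.indicator_of_mem h]
          exact mul_le_mul_of_nonneg_left (hC t) (abs_nonneg _)
        · rw [Set.indicator_of_notMem h, Set.indicator_of_notMem h]
          simp
      refine le_trans hbound ?_
      rw [integral_indicator_const _ measurableSet_Ioo]
      have hμIoo : μ (Ioo (0:ℝ) x) = ENNReal.ofReal x := by
        rw [hμ, Measure.restrict_apply measurableSet_Ioo,
          inter_eq_self_of_subset_left (Ioo_subset_Ioo le_rfl hx1.le), Real.volume_Ioo]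
        norm_num
      rw [measureReal_def, hμIoo, ENNReal.toReal_ofReal hx0.le, smul_eq_mul]
      have hc1nn : 0 ≤ c1 x := by
        rw [hc1]
        have := wden_nonneg x
        positivity
      rw [abs_of_nonneg hc1nn]
      refine le_of_eq ?_
      simp only [hc1]
      field_simp
  -- the two slice computations
  have claim_left : ∀ x ∈ Ioo (0:ℝ) 1, ∫ t, g1 (x, t) ∂μ = c1 x * ∫ t in Ioo (0:ℝ) x, f t := by
    intro x hx
    simp only [hg1]
    rw [MeasureTheory.integral_const_mul, MeasureTheory.integral_indicator measurableSet_Ioo, hμ,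
      Measure.restrict_restrict measurableSet_Ioo,
      inter_eq_self_of_subset_left (Ioo_subset_Ioo le_rfl hx.2.le)]
  have claim_right : ∀ t ∈ Ioo (0:ℝ) 1, ∫ x, g1 (x, t) ∂μ
      = (Real.sqrt (1-t) / (Real.pi * Real.sqrt t)) * f t := by
    intro t ht
    have hpt : ∀ x : ℝ, g1 (x, t) = (Ioi t).indicator (fun x => c1 x * f t) x := by
      intro x
      by_cases h : t < x
      · rw [hg1]
        simp only [Set.indicator_of_mem (mem_Ioi.mpr h),
          Set.indicator_of_mem (mem_Ioo.mpr ⟨ht.1, h⟩)]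
      · rw [hg1]
        simp only [Set.indicator_of_notMem (fun hm => h (mem_Ioi.mp hm)),
          Set.indicator_of_notMem (fun hm => h (mem_Ioo.mp hm).2), mul_zero]
    rw [integral_congr_ae (Filter.Eventually.of_forall hpt)]
    rw [MeasureTheory.integral_indicator measurableSet_Ioi, hμ,
      Measure.restrict_restrict measurableSet_Ioi]
    have hinter : Ioi t ∩ Ioo (0:ℝ) 1 = Ioo t 1 := by
      ext y
      simp only [mem_inter_iff, mem_Ioi, mem_Ioo]
      exact ⟨fun h => ⟨h.1, h.2.2⟩, fun h => ⟨h.1, ht.1.trans h.1, h.2⟩⟩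
    rw [hinter, MeasureTheory.integral_mul_const, (hA t ht).2]
  -- assembly
  have hswap : ∫ x, (∫ t, g1 (x, t) ∂μ) ∂μ = ∫ t, (∫ x, g1 (x, t) ∂μ) ∂μ := by
    rw [← Function.uncurry_curry g1] at hint
    exact integral_integral_swap hint
  rw [← Function.uncurry_curry g1] at hint
  refine ⟨?_, ?_, ?_⟩
  · exact (hint.integral_prod_left).congr
      (by filter_upwards [ae_restrict_mem measurableSet_Ioo] with x hx using claim_left x hx)
  · exact (hint.integral_prod_right).congr
      (by filter_upwards [ae_restrict_mem measurableSet_Ioo] with t ht using claim_right t ht)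
  · calc ∫ x in Ioo (0:ℝ) 1, (wden x * (1/(2*x))) * ∫ t in Ioo (0:ℝ) x, f t
        = ∫ x, (∫ t, g1 (x, t) ∂μ) ∂μ := by
          refine integral_congr_ae ?_
          filter_upwards [ae_restrict_mem measurableSet_Ioo] with x hx
          exact (claim_left x hx).symm
      _ = ∫ t, (∫ x, g1 (x, t) ∂μ) ∂μ := hswap
      _ = ∫ t in Ioo (0:ℝ) 1, (Real.sqrt (1-t) / (Real.pi * Real.sqrt t)) * f t := by
          refine integral_congr_ae ?_
          filter_upwards [ae_restrict_mem measurableSet_Ioo] with t ht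
          exact claim_right t ht

lemma T2 (f : ℝ → ℝ) (hf : Measurable f) (C : ℝ) (hC : ∀ x, |f x| ≤ C) :
    Integrable (fun x => (wden x * (1/(2*(1-x)))) * ∫ t in Ioo x (1:ℝ), f t)
      (volume.restrict (Ioo (0:ℝ) 1)) ∧
    Integrable (fun t => (Real.sqrt t / (Real.pi * Real.sqrt (1-t))) * f t)
      (volume.restrict (Ioo (0:ℝ) 1)) ∧
    ∫ x in Ioo (0:ℝ) 1, (wden x * (1/(2*(1-x)))) * ∫ t in Ioo x (1:ℝ), f t
      = ∫ t in Ioo (0:ℝ) 1, (Real.sqrt t / (Real.pi * Real.sqrt (1-t))) * f t := by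
  have hCnn : 0 ≤ C := le_trans (abs_nonneg _) (hC 0)
  set μ := volume.restrict (Ioo (0:ℝ) 1) with hμ
  set c2 : ℝ → ℝ := fun x => wden x * (1/(2*(1-x))) with hc2
  have hc2meas : Measurable c2 := by
    apply wden_meas.mul
    simp only [one_div]
    fun_prop
  set g2 : ℝ × ℝ → ℝ := fun p => c2 p.1 * (Ioo p.1 (1:ℝ)).indicator f p.2 with hg2
  have hg2eq : g2 = {q : ℝ × ℝ | q.1 < q.2 ∧ q.2 < 1}.indicator
      (fun q => c2 q.1 * f q.2) := by
    ext p
    simp only [hg2, Set.indicator_apply, mem_Ioo, mem_setOf_eq]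
    by_cases h : p.1 < p.2 ∧ p.2 < 1 <;> simp [h]
  have hSmeas : MeasurableSet {q : ℝ × ℝ | q.1 < q.2 ∧ q.2 < 1} :=
    (measurableSet_lt measurable_fst measurable_snd).inter
      (measurableSet_lt measurable_snd measurable_const)
  have hg2meas : Measurable g2 := by
    rw [hg2eq]
    exact ((hc2meas.comp measurable_fst).mul (hf.comp measurable_snd)).indicator hSmeas
  have hslice : ∀ x : ℝ, Integrable (fun t => g2 (x, t)) μ := by
    intro x
    refine Integrable.mono' (integrable_const (|c2 x| * C))
      ((hg2meas.comp (measurable_prodMk_left)).aestronglyMeasurable)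
      (Filter.Eventually.of_forall fun t => ?_)
    simp only [hg2, Real.norm_eq_abs, abs_mul]
    by_cases h : t ∈ Ioo x (1:ℝ)
    · rw [Set.indicator_of_mem h]
      exact mul_le_mul_of_nonneg_left (hC t) (abs_nonneg _)
    · rw [Set.indicator_of_notMem h]
      simp [mul_nonneg (abs_nonneg _) hCnn]
  have hint : Integrable g2 (μ.prod μ) := by
    rw [← Function.uncurry_curry g2] at hg2meas ⊢
    refine (integrable_prod_iff hg2meas.aestronglyMeasurable).mpr ⟨?_, ?_⟩
    · exact Filter.Eventually.of_forall fun x => hslice x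
    · refine Integrable.mono' ((wden_int.const_mul (C/2) :
        Integrable (fun x => (C/2) * wden x) μ))
        (hg2meas.aestronglyMeasurable.norm.integral_prod_right')
        ?_
      filter_upwards [ae_restrict_mem measurableSet_Ioo] with x hx
      obtain ⟨hx0, hx1⟩ := hx
      have hnn : 0 ≤ ∫ t, ‖Function.uncurry (Function.curry g2) (x, t)‖ ∂μ :=
        integral_nonneg fun t => norm_nonneg _
      rw [Real.norm_eq_abs, abs_of_nonneg hnn]
      have hbound : ∫ t, ‖Function.uncurry (Function.curry g2) (x, t)‖ ∂μ
          ≤ ∫ t, (Ioo x (1:ℝ)).indicator (fun _ => |c2 x| * C) t ∂μ := by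
        refine integral_mono (hslice x).norm
          ((integrable_const _).indicator measurableSet_Ioo) fun t => ?_
        simp only [Function.uncurry_curry, hg2, Real.norm_eq_abs, abs_mul]
        by_cases h : t ∈ Ioo x (1:ℝ)
        · rw [Set.indicator_of_mem h, Set.indicator_of_mem h]
          exact mul_le_mul_of_nonneg_left (hC t) (abs_nonneg _)
        · rw [Set.indicator_of_notMem h, Set.indicator_of_notMem h]
          simp
      refine le_trans hbound ?_
      rw [integral_indicator_const _ measurableSet_Ioo]
      have hμIoo : μ (Ioo x (1:ℝ)) = ENNReal.ofReal (1-x) := by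
        rw [hμ, Measure.restrict_apply measurableSet_Ioo,
          inter_eq_self_of_subset_left (Ioo_subset_Ioo hx0.le le_rfl), Real.volume_Ioo]
      rw [measureReal_def, hμIoo, ENNReal.toReal_ofReal (by linarith : (0:ℝ) ≤ 1 - x), smul_eq_mul]
      have hc2nn : 0 ≤ c2 x := by
        rw [hc2]
        have h1 := wden_nonneg x
        have h2 : (0:ℝ) < 1 - x := by linarith
        positivity
      rw [abs_of_nonneg hc2nn]
      refine le_of_eq ?_
      simp only [hc2]
      have h1x : (1:ℝ) - x ≠ 0 := ne_of_gt (by linarith)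
      field_simp
  have claim_left : ∀ x ∈ Ioo (0:ℝ) 1, ∫ t, g2 (x, t) ∂μ
      = c2 x * ∫ t in Ioo x (1:ℝ), f t := by
    intro x hx
    simp only [hg2]
    rw [MeasureTheory.integral_const_mul, MeasureTheory.integral_indicator measurableSet_Ioo, hμ,
      Measure.restrict_restrict measurableSet_Ioo,
      inter_eq_self_of_subset_left (Ioo_subset_Ioo hx.1.le le_rfl)]
  have claim_right : ∀ t ∈ Ioo (0:ℝ) 1, ∫ x, g2 (x, t) ∂μ
      = (Real.sqrt t / (Real.pi * Real.sqrt (1-t))) * f t := by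
    intro t ht
    have hpt : ∀ x : ℝ, g2 (x, t) = (Iio t).indicator (fun x => c2 x * f t) x := by
      intro x
      by_cases h : x < t
      · rw [hg2]
        simp only [Set.indicator_of_mem (mem_Iio.mpr h),
          Set.indicator_of_mem (mem_Ioo.mpr ⟨h, ht.2⟩)]
      · rw [hg2]
        simp only [Set.indicator_of_notMem (fun hm => h (mem_Iio.mp hm)),
          Set.indicator_of_notMem (fun hm => h (mem_Ioo.mp hm).1), mul_zero]
    rw [integral_congr_ae (Filter.Eventually.of_forall hpt)]
    rw [MeasureTheory.integral_indicator measurableSet_Iio, hμ,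
      Measure.restrict_restrict measurableSet_Iio]
    have hinter : Iio t ∩ Ioo (0:ℝ) 1 = Ioo 0 t := by
      ext y
      simp only [mem_inter_iff, mem_Iio, mem_Ioo]
      exact ⟨fun h => ⟨h.2.1, h.1⟩, fun h => ⟨h.2, h.1, h.2.trans ht.2⟩⟩
    rw [hinter, MeasureTheory.integral_mul_const, (hB t ht).2]
  have hswap : ∫ x, (∫ t, g2 (x, t) ∂μ) ∂μ = ∫ t, (∫ x, g2 (x, t) ∂μ) ∂μ := by
    rw [← Function.uncurry_curry g2] at hint
    exact integral_integral_swap hint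
  rw [← Function.uncurry_curry g2] at hint
  refine ⟨?_, ?_, ?_⟩
  · exact (hint.integral_prod_left).congr
      (by filter_upwards [ae_restrict_mem measurableSet_Ioo] with x hx using claim_left x hx)
  · exact (hint.integral_prod_right).congr
      (by filter_upwards [ae_restrict_mem measurableSet_Ioo] with t ht using claim_right t ht)
  · calc ∫ x in Ioo (0:ℝ) 1, (wden x * (1/(2*(1-x)))) * ∫ t in Ioo x (1:ℝ), f t
        = ∫ x, (∫ t, g2 (x, t) ∂μ) ∂μ := by
          refine integral_congr_ae ?_
          filter_upwards [ae_restrict_mem measurableSet_Ioo] with x hx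
          exact (claim_left x hx).symm
      _ = ∫ t, (∫ x, g2 (x, t) ∂μ) ∂μ := hswap
      _ = ∫ t in Ioo (0:ℝ) 1, (Real.sqrt t / (Real.pi * Real.sqrt (1-t))) * f t := by
          refine integral_congr_ae ?_
          filter_upwards [ae_restrict_mem measurableSet_Ioo] with t ht
          exact claim_right t ht

lemma kernel_sum (t : ℝ) (ht : t ∈ Ioo (0:ℝ) 1) :
    Real.sqrt (1-t) / (Real.pi * Real.sqrt t) + Real.sqrt t / (Real.pi * Real.sqrt (1-t))
      = wden t := by
  obtain ⟨ht0, ht1⟩ := ht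
  have ha : (0:ℝ) < Real.sqrt t := Real.sqrt_pos.mpr ht0
  have hb : (0:ℝ) < Real.sqrt (1-t) := Real.sqrt_pos.mpr (by linarith)
  have e1 : Real.sqrt t ^ 2 = t := Real.sq_sqrt ht0.le
  have e2 : Real.sqrt (1-t) ^ 2 = 1 - t := Real.sq_sqrt (by linarith)
  unfold wden
  rw [Real.sqrt_mul ht0.le]
  field_simp
  linear_combination (1) * e1
    + (1) * e2

/-- the arcsine distribution is a probability measure with `λR = λ`,
i.e. `∫ Rf dλ = ∫ f dλ` for all bounded measurable `f`. -/
theorem stmt1 :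
    IsProbabilityMeasure arcsine ∧
    ∀ f : ℝ → ℝ, Measurable f → (∃ C, ∀ x, |f x| ≤ C) →
      ∫ x, Rop f x ∂arcsine = ∫ x, f x ∂arcsine := by
  refine ⟨arcsine_prob, ?_⟩
  intro f hf hbd
  obtain ⟨C, hC⟩ := hbd
  obtain ⟨hi1, hj1, he1⟩ := T1 f hf C hC
  obtain ⟨hi2, hj2, he2⟩ := T2 f hf C hC
  rw [integral_arcsine, integral_arcsine]
  calc ∫ x in Ioo (0:ℝ) 1, wden x * Rop f x
      = ∫ x in Ioo (0:ℝ) 1, ((wden x * (1/(2*x))) * (∫ t in Ioo (0:ℝ) x, f t)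
          + (wden x * (1/(2*(1-x)))) * (∫ t in Ioo x (1:ℝ), f t)) := by
        refine setIntegral_congr_fun measurableSet_Ioo fun x hx => ?_
        have hx0 : (0:ℝ) < x := hx.1
        have hfi : IntegrableOn f (Ioo (0:ℝ) x) volume := by
          refine Integrable.mono' (integrable_const C)
            hf.aestronglyMeasurable.restrict
            (Filter.Eventually.of_forall fun t => ?_)
          · rw [Real.norm_eq_abs]; exact hC t
        have hconst : IntegrableOn
            (fun _ : ℝ => (1/(1-x)) * ∫ t in Ioo x (1:ℝ), f t) (Ioo (0:ℝ) x) volume := by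
          refine integrableOn_const (ne_of_lt ?_)
          rw [Real.volume_Ioo]
          exact ENNReal.ofReal_lt_top
        unfold Rop
        rw [MeasureTheory.integral_add hfi hconst, setIntegral_const, measureReal_def, Real.volume_Ioo,
          ENNReal.toReal_ofReal (by linarith : (0:ℝ) ≤ x - 0), smul_eq_mul]
        have hxx : x * x⁻¹ = 1 := mul_inv_cancel₀ hx0.ne'
        generalize (1:ℝ) - x = u
        linear_combination (1/2 * (1/u) * (∫ t in Ioo x (1:ℝ), f t) * wden x) * hxx
    _ = (∫ x in Ioo (0:ℝ) 1, (wden x * (1/(2*x))) * ∫ t in Ioo (0:ℝ) x, f t)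
        + ∫ x in Ioo (0:ℝ) 1, (wden x * (1/(2*(1-x)))) * ∫ t in Ioo x (1:ℝ), f t :=
        integral_add hi1 hi2
    _ = (∫ t in Ioo (0:ℝ) 1, (Real.sqrt (1-t) / (Real.pi * Real.sqrt t)) * f t)
        + ∫ t in Ioo (0:ℝ) 1, (Real.sqrt t / (Real.pi * Real.sqrt (1-t))) * f t := by
        rw [he1, he2]
    _ = ∫ t in Ioo (0:ℝ) 1, ((Real.sqrt (1-t) / (Real.pi * Real.sqrt t)) * f t
          + (Real.sqrt t / (Real.pi * Real.sqrt (1-t))) * f t) :=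
        (integral_add hj1 hj2).symm
    _ = ∫ x in Ioo (0:ℝ) 1, wden x * f x := by
        refine setIntegral_congr_fun measurableSet_Ioo fun t ht => ?_
        rw [← kernel_sum t ht]
        ring
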